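/- Let ρ be an ordinal and x, u, v : ℕ → X sequences such that for every m ∈ ℕ, {n : d (u n) (x n) ♯ ω^ρ · m ≤ d (v n) (x n)} ∈ F. Then u and v are not ρ-limitedly distant; in particular they represent hypernodes lying in different ρ-galaxies. -/

import Mathlib

open Filter Ordinal
open scoped Ordinal

universe u

/-- Natural (Hessenberg) sum of ordinals, as in the older Mathlib's `Ordinal.nadd`
(file `SetTheory/Ordinal/NaturalOps`, since removed from Mathlib). -/
noncomputable def Ordinal.nadd : Ordinal.{u} → Ordinal.{u} → Ordinal.{u}
  | a, b =>
    max (blsub.{u, u} a fun a' _ => nadd a' b) (blsub.{u, u} b fun b' _ => nadd a b')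
termination_by a b => (a, b)

infixl:65 " ♯ " => Ordinal.nadd

/-- Sequences `x, y : ℕ → X` are `ρ`-limitedly distant if there exists `μ ∈ ℕ` with
`{n : d (x n) (y n) ≤ ω^ρ · μ} ∈ F`. -/
def LimitedlyDistant {X : Type*} (d : X → X → Ordinal) (F : Ultrafilter ℕ)
    (ρ : Ordinal) (x y : ℕ → X) : Prop :=
  ∃ μ : ℕ, {n : ℕ | d (x n) (y n) ≤ ω ^ ρ * μ} ∈ F

namespace Ordinal

theorem lt_nadd_iff' {a b c : Ordinal.{u}} :
    a < b ♯ c ↔ (∃ b' < b, a ≤ b' ♯ c) ∨ ∃ c' < c, a ≤ b ♯ c' := by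
  rw [Ordinal.nadd]; simp [lt_blsub_iff]

theorem nadd_lt_nadd_left {b c : Ordinal.{u}} (h : b < c) (a : Ordinal.{u}) : a ♯ b < a ♯ c :=
  lt_nadd_iff'.2 (Or.inr ⟨b, h, le_rfl⟩)

theorem nadd_le_nadd_left {b c : Ordinal.{u}} (h : b ≤ c) (a : Ordinal.{u}) : a ♯ b ≤ a ♯ c := by
  rcases lt_or_eq_of_le h with (h | rfl)
  · exact (nadd_lt_nadd_left h a).le
  · exact le_rfl

theorem nadd_le_nadd_iff_left (a : Ordinal.{u}) {b c : Ordinal.{u}} : a ♯ b ≤ a ♯ c ↔ b ≤ c :=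
  (StrictMono.le_iff_le (fun _ _ h => nadd_lt_nadd_left h a))

theorem nadd_comm (a b : Ordinal.{u}) : a ♯ b = b ♯ a := by
  rw [Ordinal.nadd, Ordinal.nadd, max_comm]
  congr <;> ext <;> apply nadd_comm
termination_by (a, b)

end Ordinal

theorem not_limitedlyDistant_of_closer
    (X : Type*) (d : X → X → Ordinal)
    (hd0 : ∀ a b : X, d a b = 0 ↔ a = b)
    (hdsymm : ∀ a b : X, d a b = d b a)
    (hdtri : ∀ a b c : X, d a c ≤ d a b ♯ d b c)
    (F : Ultrafilter ℕ) (hF : ∀ s : Set ℕ, sᶜ.Finite → s ∈ F)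
    (ρ : Ordinal) (x u v : ℕ → X)
    (h : ∀ m : ℕ, {n : ℕ | d (u n) (x n) ♯ ω ^ ρ * m ≤ d (v n) (x n)} ∈ F) :
    ¬ LimitedlyDistant d F ρ u v := by
  rintro ⟨μ, hμ⟩
  have hm := h (μ + 1)
  obtain ⟨n, hn1, hn2⟩ := Filter.nonempty_of_mem (Filter.inter_mem hμ hm)
  simp only [Set.mem_setOf_eq] at hn1 hn2
  have key : d (u n) (x n) ♯ ω ^ ρ * (↑(μ + 1) : ℕ) ≤ d (u n) (x n) ♯ ω ^ ρ * μ := by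
    calc d (u n) (x n) ♯ ω ^ ρ * (↑(μ + 1) : ℕ) ≤ d (v n) (x n) := hn2
      _ ≤ d (v n) (u n) ♯ d (u n) (x n) := hdtri _ _ _
      _ = d (u n) (x n) ♯ d (u n) (v n) := by rw [hdsymm (v n) (u n), Ordinal.nadd_comm]
      _ ≤ d (u n) (x n) ♯ ω ^ ρ * μ := nadd_le_nadd_left hn1 _
  rw [Ordinal.nadd_le_nadd_iff_left] at key
  have hlt : ω ^ ρ * (μ : Ordinal) < ω ^ ρ * (↑(μ + 1) : ℕ) := by
    apply mul_lt_mul_of_pos_left _ (Ordinal.opow_pos _ Ordinal.omega0_pos)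
    exact_mod_cast Nat.lt_succ_self μ
  exact absurd key hlt.not_ge
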